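/- Suppose X is an arithmetically closed family of subsets of ℕ such that every decreasing ω-sequence in X/Fin has a lower bound in X/Fin (i.e., X/Fin is countably closed for ω-sequences). Then X = P(ℕ). -/

import Mathlib

/-- Terms of first-order arithmetic: variables, 0, 1, +, ×. -/
inductive ATerm : Type
  | var : ℕ → ATerm
  | zero : ATerm
  | one : ATerm
  | add : ATerm → ATerm → ATerm
  | mul : ATerm → ATerm → ATerm

def ATerm.eval (v : ℕ → ℕ) : ATerm → ℕ
  | .var i => v i
  | .zero => 0
  | .one => 1
  | .add s t => s.eval v + t.eval v
  | .mul s t => s.eval v * t.eval v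

/-- Formulas of first-order arithmetic with a single set parameter `A`
(atomic formulas `s = t` and `t ∈ A`). -/
inductive AForm : Type
  | eq : ATerm → ATerm → AForm
  | mem : ATerm → AForm
  | not : AForm → AForm
  | and : AForm → AForm → AForm
  | ex : ℕ → AForm → AForm

def AForm.Sat (A : Set ℕ) : (ℕ → ℕ) → AForm → Prop
  | v, .eq s t => s.eval v = t.eval v
  | v, .mem t => t.eval v ∈ A
  | v, .not φ => ¬ AForm.Sat A v φ
  | v, .and φ ψ => AForm.Sat A v φ ∧ AForm.Sat A v ψ
  | v, .ex i φ => ∃ m : ℕ, AForm.Sat A (Function.update v i m) φ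

/-- `B` is arithmetically definable from the set parameter `A`. -/
def ArithIn (B A : Set ℕ) : Prop :=
  ∃ φ : AForm, ∀ n : ℕ, n ∈ B ↔ AForm.Sat A (Function.update (fun _ => 0) 0 n) φ


namespace S3
open ATerm AForm

def num : ℕ → ATerm
  | 0 => .zero
  | n+1 => .add (num n) .one

@[simp] lemma num_eval (v : ℕ → ℕ) (n : ℕ) : (num n).eval v = n := by
  induction n with
  | zero => rfl
  | succ n ih => simp [num, ATerm.eval, ih]

def orF (φ ψ : AForm) : AForm := .not (.and (.not φ) (.not ψ))
def impF (φ ψ : AForm) : AForm := .not (.and φ (.not ψ))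
def allF (i : ℕ) (φ : AForm) : AForm := .not (.ex i (.not φ))

@[simp] lemma sat_orF {A v φ ψ} : AForm.Sat A v (orF φ ψ) ↔ AForm.Sat A v φ ∨ AForm.Sat A v ψ := by
  simp [orF, AForm.Sat]; tauto

@[simp] lemma sat_impF {A v φ ψ} : AForm.Sat A v (impF φ ψ) ↔ (AForm.Sat A v φ → AForm.Sat A v ψ) := by
  simp [impF, AForm.Sat]

@[simp] lemma sat_allF {A v i φ} : AForm.Sat A v (allF i φ) ↔ ∀ m, AForm.Sat A (Function.update v i m) φ := by
  simp [allF, AForm.Sat]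

/-- `ta < tb`, using `c` as auxiliary bound variable. -/
def ltF (ta tb : ATerm) (c : ℕ) : AForm := .ex c (.eq (.add ta (.add (.var c) .one)) tb)


lemma sat_eq {A v s t} : AForm.Sat A v (.eq s t) ↔ s.eval v = t.eval v := Iff.rfl
lemma sat_mem {A v t} : AForm.Sat A v (.mem t) ↔ t.eval v ∈ A := Iff.rfl
lemma sat_not {A v φ} : AForm.Sat A v (.not φ) ↔ ¬ AForm.Sat A v φ := Iff.rfl
lemma sat_and {A v φ ψ} : AForm.Sat A v (.and φ ψ) ↔ AForm.Sat A v φ ∧ AForm.Sat A v ψ := Iff.rfl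
lemma sat_ex {A v i φ} : AForm.Sat A v (.ex i φ) ↔ ∃ m, AForm.Sat A (Function.update v i m) φ := Iff.rfl

lemma sat_ltF {A : Set ℕ} {v : ℕ → ℕ} {ta tb : ATerm} {c : ℕ}
    (ha : ∀ w m, ta.eval (Function.update w c m) = ta.eval w)
    (hb : ∀ w m, tb.eval (Function.update w c m) = tb.eval w) :
    AForm.Sat A v (ltF ta tb c) ↔ ta.eval v < tb.eval v := by
  simp only [ltF, sat_ex, sat_eq, ATerm.eval, ha, hb, Function.update_self]
  exact ⟨fun ⟨m, h⟩ => by omega, fun h => ⟨tb.eval v - ta.eval v - 1, by omega⟩⟩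

/-- formula: `Nat.pair (v 5) (v 6) = v k`, using 8 as auxiliary variable. -/
def pairF (k : ℕ) : AForm :=
  orF (.and (ltF (.var 5) (.var 6) 8)
            (.eq (.var k) (.add (.mul (.var 6) (.var 6)) (.var 5))))
      (.and (.not (ltF (.var 5) (.var 6) 8))
            (.eq (.var k) (.add (.add (.mul (.var 5) (.var 5)) (.var 5)) (.var 6))))

lemma sat_pairF {A : Set ℕ} {w : ℕ → ℕ} {k : ℕ} (hk : k ≠ 8) :
    AForm.Sat A w (pairF k) ↔ Nat.pair (w 5) (w 6) = w k := by
  have h5 : ∀ (f : ℕ → ℕ) m, (ATerm.var 5).eval (Function.update f 8 m) = (ATerm.var 5).eval f :=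
    fun f m => Function.update_of_ne (by omega) _ _
  have h6 : ∀ (f : ℕ → ℕ) m, (ATerm.var 6).eval (Function.update f 8 m) = (ATerm.var 6).eval f :=
    fun f m => Function.update_of_ne (by omega) _ _
  simp only [pairF, sat_orF, sat_and, sat_not, sat_eq, sat_ltF h5 h6, ATerm.eval]
  unfold Nat.pair
  rcases lt_or_ge (w 5) (w 6) with h | h
  · rw [if_pos h]
    constructor
    · rintro (⟨_, hk⟩ | ⟨hn, _⟩)
      · exact hk.symm
      · exact absurd h hn
    · intro hk; exact Or.inl ⟨h, hk.symm⟩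
  · rw [if_neg (not_lt.mpr h)]
    constructor
    · rintro (⟨hn, _⟩ | ⟨_, hk⟩)
      · exact absurd hn (not_lt.mpr h)
      · exact hk.symm
    · intro hk; exact Or.inr ⟨not_lt.mpr h, hk.symm⟩

/-- term `1 + (v i + 1) * v 6` -/
def dT (i : ℕ) : ATerm := .add .one (.mul (.add (.var i) .one) (.var 6))

def Dform (i k : ℕ) : AForm :=
  .ex 5 (.ex 6 (.and (pairF k)
    (.and (.ex 7 (.eq (.var 5) (.add (.mul (.var 7) (dT i)) .one)))
          (ltF .one (dT i) 8))))

def Drel (n k : ℕ) : Prop := k.unpair.1 % (1 + (n+1) * k.unpair.2) = 1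

lemma drel_iff (n k : ℕ) :
    Drel n k ↔ ∃ a b, Nat.pair a b = k ∧ (∃ q, a = q * (1+(n+1)*b) + 1) ∧ 1 < 1+(n+1)*b := by
  constructor
  · intro h
    refine ⟨k.unpair.1, k.unpair.2, Nat.pair_unpair k, ?_, ?_⟩
    · refine ⟨k.unpair.1 / (1 + (n+1) * k.unpair.2), ?_⟩
      have h1 := Nat.div_add_mod k.unpair.1 (1 + (n+1) * k.unpair.2)
      have h2 : k.unpair.1 / (1 + (n+1) * k.unpair.2) * (1 + (n+1) * k.unpair.2)
          = (1 + (n+1) * k.unpair.2) * (k.unpair.1 / (1 + (n+1) * k.unpair.2)) :=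
        Nat.mul_comm _ _
      unfold Drel at h; omega
    · by_contra hd
      have hd1 : 1 + (n+1) * k.unpair.2 = 1 := by omega
      unfold Drel at h
      rw [hd1, Nat.mod_one] at h
      exact absurd h (by decide)
  · rintro ⟨a, b, rfl, ⟨q, rfl⟩, hd⟩
    unfold Drel
    rw [Nat.unpair_pair]
    simp only
    have : q * (1 + (n+1) * b) + 1 = 1 + (1 + (n+1)*b) * q := by ring
    rw [this, Nat.add_mul_mod_self_left, Nat.mod_eq_of_lt hd]

lemma sat_Dform {A : Set ℕ} {w : ℕ → ℕ} {i k : ℕ} (hi : i < 5) (hk : k < 5) :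
    AForm.Sat A w (Dform i k) ↔ Drel (w i) (w k) := by
  have hone : ∀ (f : ℕ → ℕ) m, (ATerm.one).eval (Function.update f 8 m) = (ATerm.one).eval f :=
    fun _ _ => rfl
  have hdT : ∀ (f : ℕ → ℕ) m, (dT i).eval (Function.update f 8 m) = (dT i).eval f := by
    intro f m
    simp only [dT, ATerm.eval, Function.update_of_ne (show i ≠ 8 by omega),
      Function.update_of_ne (show (6:ℕ) ≠ 8 by omega)]
  have key : ∀ u : ℕ → ℕ,
      AForm.Sat A u (.and (pairF k)
        (.and (.ex 7 (.eq (.var 5) (.add (.mul (.var 7) (dT i)) .one)))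
          (ltF .one (dT i) 8))) ↔
      (Nat.pair (u 5) (u 6) = u k ∧ (∃ q, u 5 = q * (1 + (u i + 1) * u 6) + 1)
        ∧ 1 < 1 + (u i + 1) * u 6) := by
    intro u
    rw [sat_and, sat_and, sat_pairF (show k ≠ 8 by omega), sat_ltF hone hdT]
    simp only [sat_ex, sat_eq, ATerm.eval, dT, Function.update_self,
      Function.update_of_ne (show (5:ℕ) ≠ 7 by omega),
      Function.update_of_ne (show (6:ℕ) ≠ 7 by omega),
      Function.update_of_ne (show i ≠ 7 by omega)]
  rw [drel_iff]
  simp only [Dform, sat_ex, key, Function.update_self,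
    Function.update_of_ne (show (5:ℕ) ≠ 6 by omega),
    Function.update_of_ne (show i ≠ 6 by omega),
    Function.update_of_ne (show i ≠ 5 by omega),
    Function.update_of_ne (show k ≠ 6 by omega),
    Function.update_of_ne (show k ≠ 5 by omega)]


/-- formula with free variable 0 = k saying `Drel n k` (n a fixed numeral). -/
def psi (n : ℕ) : AForm := .ex 1 (.and (.eq (.var 1) (num n)) (Dform 1 0))

lemma sat_psi {A : Set ℕ} {v : ℕ → ℕ} {n : ℕ} :
    AForm.Sat A v (psi n) ↔ Drel n (v 0) := by
  simp only [psi, sat_ex, sat_and, sat_eq, ATerm.eval, num_eval,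
    sat_Dform (show (1:ℕ) < 5 by omega) (show (0:ℕ) < 5 by omega),
    Function.update_self, Function.update_of_ne (show (0:ℕ) ≠ 1 by omega)]
  constructor
  · rintro ⟨m, rfl, h⟩; exact h
  · intro h; exact ⟨n, rfl, h⟩

def lit (b : Bool) (n : ℕ) : AForm := cond b (psi n) (.not (psi n))

lemma sat_lit {A : Set ℕ} {v : ℕ → ℕ} {b : Bool} {n : ℕ} :
    AForm.Sat A v (lit b n) ↔ (Drel n (v 0) ↔ b = true) := by
  cases b <;> simp [lit, sat_not, sat_psi]

def conj (χ : ℕ → Bool) : ℕ → AForm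
  | 0 => lit (χ 0) 0
  | m+1 => .and (conj χ m) (lit (χ (m+1)) (m+1))

lemma sat_conj {A : Set ℕ} {v : ℕ → ℕ} {χ : ℕ → Bool} {m : ℕ} :
    AForm.Sat A v (conj χ m) ↔ ∀ n ≤ m, (Drel n (v 0) ↔ χ n = true) := by
  induction m with
  | zero =>
    simp only [conj, sat_lit]
    constructor
    · intro h n hn
      have : n = 0 := by omega
      subst this; exact h
    · intro h; exact h 0 le_rfl
  | succ m ih =>
    simp only [conj, sat_and, ih, sat_lit]
    constructor
    · rintro ⟨h1, h2⟩ n hn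
      rcases Nat.lt_or_ge n (m+1) with h | h
      · exact h1 n (by omega)
      · have : n = m + 1 := by omega
        subst this; exact h2
    · intro h
      exact ⟨fun n hn => h n (by omega), h (m+1) le_rfl⟩

/-- decode formula: free variable 0 = n; says `∃ m ∀ k (k ∈ C ∧ m < k → Drel n k)`. -/
def decF : AForm :=
  .ex 1 (allF 2 (impF (.and (.mem (.var 2)) (ltF (.var 1) (.var 2) 3)) (Dform 0 2)))

lemma sat_decF {C : Set ℕ} {v : ℕ → ℕ} :
    AForm.Sat C v decF ↔ ∃ m, ∀ k, (k ∈ C ∧ m < k) → Drel (v 0) k := by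
  have h1 : ∀ (f : ℕ → ℕ) m, (ATerm.var 1).eval (Function.update f 3 m) = (ATerm.var 1).eval f :=
    fun f m => Function.update_of_ne (by omega) _ _
  have h2 : ∀ (f : ℕ → ℕ) m, (ATerm.var 2).eval (Function.update f 3 m) = (ATerm.var 2).eval f :=
    fun f m => Function.update_of_ne (by omega) _ _
  simp only [decF, sat_ex, sat_allF, sat_impF, sat_and, sat_mem, sat_ltF h1 h2, ATerm.eval,
    sat_Dform (show (0:ℕ) < 5 by omega) (show (2:ℕ) < 5 by omega),
    Function.update_self,
    Function.update_of_ne (show (1:ℕ) ≠ 2 by omega),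
    Function.update_of_ne (show (0:ℕ) ≠ 2 by omega),
    Function.update_of_ne (show (0:ℕ) ≠ 1 by omega)]


lemma aset_infinite (χ : ℕ → Bool) (m : ℕ) :
    {k : ℕ | ∀ n ≤ m, (Drel n k ↔ χ n = true)}.Infinite := by
  classical
  set b : ℕ := (m+1).factorial with hb
  have hb1 : 1 ≤ b := Nat.one_le_iff_ne_zero.mpr (Nat.factorial_ne_zero _)
  set d : ℕ → ℕ := fun n => 1 + (n+1) * b with hd
  have hd2 : ∀ n, 2 ≤ d n := by
    intro n
    have : 0 < (n+1) * b := Nat.mul_pos (Nat.succ_pos n) (by omega)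
    simp only [hd]; omega
  -- pairwise coprimality of the moduli
  have hco : ∀ i j, i < j → j ≤ m → Nat.Coprime (d i) (d j) := by
    intro i j hij hjm
    rw [Nat.coprime_iff_gcd_eq_one]
    by_contra hg
    obtain ⟨p, hp, hpd⟩ := Nat.exists_prime_and_dvd hg
    have hpi : p ∣ d i := hpd.trans (Nat.gcd_dvd_left _ _)
    have hpj : p ∣ d j := hpd.trans (Nat.gcd_dvd_right _ _)
    have hpb : ¬ p ∣ b := by
      intro hdvd
      have h1 : p ∣ (i+1) * b := Dvd.dvd.mul_left hdvd _
      have h2 : p ∣ 1 := by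
        have : d i - (i+1) * b = 1 := by simp [hd]
        exact this ▸ Nat.dvd_sub hpi h1
      exact Nat.Prime.one_lt hp |>.ne' (Nat.dvd_one.mp h2)
    have hsub : d j - d i = (j - i) * b := by
      have e1 : (j+1) * b = j * b + b := by ring
      have e2 : (i+1) * b = i * b + b := by ring
      have e3 : (j - i) * b = j * b - i * b := Nat.sub_mul j i b
      have e4 : i * b ≤ j * b := Nat.mul_le_mul_right b (le_of_lt hij)
      simp only [hd]
      omega
    have hpd2 : p ∣ (j - i) * b := hsub ▸ Nat.dvd_sub hpj hpi
    rcases (Nat.Prime.dvd_mul hp).mp hpd2 with h | h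
    · have hji : j - i ∣ b := by
        rw [hb]
        exact Nat.dvd_factorial (by omega) (by omega)
      exact hpb (h.trans hji)
    · exact hpb h
  -- CRT
  set l : List ℕ := List.range (m+1) with hl
  have hpw : l.Pairwise (Function.onFun Nat.Coprime d) := by
    refine List.Pairwise.imp_of_mem ?_ (List.pairwise_lt_range (n := m+1))
    intro i j hi hj hij
    exact hco i j hij (by simpa [hl, Nat.lt_succ_iff] using hj)
  set r : ℕ → ℕ := fun n => cond (χ n) 1 0 with hr
  obtain ⟨a0, ha0⟩ := Nat.chineseRemainderOfList r d l hpw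
  set L : ℕ := (l.map d).prod with hL
  have hLpos : 0 < L := by
    rw [hL]
    apply List.prod_pos
    intro x hx
    simp only [List.mem_map] at hx
    obtain ⟨n, _, rfl⟩ := hx
    have := hd2 n
    omega
  have hdvd : ∀ n ≤ m, d n ∣ L := by
    intro n hn
    exact List.dvd_prod (List.mem_map.mpr ⟨n, List.mem_range.mpr (by omega), rfl⟩)
  -- the witnesses
  refine Set.infinite_of_injective_forall_mem
    (f := fun t : ℕ => Nat.pair (a0 + t * L) b) ?_ ?_
  · intro s t hst
    simp only [Nat.pair_eq_pair] at hst
    have h1 : s * L = t * L := by omega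
    exact Nat.eq_of_mul_eq_mul_right hLpos h1
  · intro t n hn
    have hmem : a0 % d n = r n % d n := ha0 n (List.mem_range.mpr (by omega))
    obtain ⟨c, hc⟩ := hdvd n hn
    have hmod : (a0 + t * L) % d n = a0 % d n := by
      rw [hc]
      have : a0 + t * (d n * c) = a0 + d n * (t * c) := by ring
      rw [this, Nat.add_mul_mod_self_left]
    have hrlt : r n < d n := by
      have := hd2 n
      cases hχ : χ n <;> simp [hr, hχ] <;> omega
    have hDrel : Drel n (Nat.pair (a0 + t * L) b) ↔ r n = 1 := by
      unfold Drel
      rw [Nat.unpair_pair]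
      simp only
      rw [hmod, hmem, Nat.mod_eq_of_lt hrlt]
    rw [hDrel]
    cases hχ : χ n <;> simp [hr, hχ]
end S3

/-- If `X` is a (nonempty) arithmetically closed family of subsets of `ℕ` such that every
`⊆_Fin`-decreasing ω-sequence in `X/Fin` (the infinite members of `X` under almost
inclusion) has a lower bound in `X/Fin`, then `X = P(ℕ)`. -/
theorem stmt3 (X : Set (Set ℕ)) (hne : X.Nonempty)
    (hac : ∀ A ∈ X, ∀ B : Set ℕ, ArithIn B A → B ∈ X)
    (hcc : ∀ B : ℕ → Set ℕ, (∀ n, B n ∈ X) → (∀ n, (B n).Infinite) →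
      (∀ n, (B (n + 1) \ B n).Finite) →
      ∃ C ∈ X, C.Infinite ∧ ∀ n, (C \ B n).Finite) :
    X = Set.univ := by
  classical
  obtain ⟨A₀, hA₀⟩ := hne
  ext A
  simp only [Set.mem_univ, iff_true]
  set χ : ℕ → Bool := fun n => decide (n ∈ A) with hχ
  set Bs : ℕ → Set ℕ := fun m => {k : ℕ | ∀ n ≤ m, (S3.Drel n k ↔ χ n = true)} with hBs
  have h1 : ∀ m, Bs m ∈ X := by
    intro m
    refine hac A₀ hA₀ _ ⟨S3.conj χ m, fun k => ?_⟩
    rw [S3.sat_conj, Function.update_self]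
    rfl
  have h2 : ∀ m, (Bs m).Infinite := fun m => S3.aset_infinite χ m
  have h3 : ∀ m, (Bs (m+1) \ Bs m).Finite := by
    intro m
    have he : Bs (m+1) \ Bs m = ∅ :=
      Set.diff_eq_empty.mpr (fun k hk n hn => hk n (by omega))
    rw [he]; exact Set.finite_empty
  obtain ⟨C, hCX, hCinf, hClow⟩ := hcc Bs h1 h2 h3
  have hA' : A = {n : ℕ | ∃ mm, ∀ k, (k ∈ C ∧ mm < k) → S3.Drel n k} := by
    ext n
    simp only [Set.mem_setOf_eq]
    constructor
    · intro hn
      obtain ⟨mm, hmm⟩ := (hClow n).bddAbove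
      refine ⟨mm, fun k ⟨hkC, hk⟩ => ?_⟩
      have hkB : k ∈ Bs n := by
        by_contra hkB
        have := hmm (Set.mem_diff_of_mem hkC hkB)
        omega
      exact (hkB n le_rfl).mpr (by simp [hχ, hn])
    · rintro ⟨mm, hmm⟩
      by_contra hn
      have hinf : (C \ (C \ Bs n)).Infinite := hCinf.diff (hClow n)
      have hsub : C \ (C \ Bs n) ⊆ C ∩ Bs n := by
        intro x hx
        rcases hx with ⟨hxC, hx2⟩
        simp only [Set.mem_diff, not_and, not_not] at hx2
        exact ⟨hxC, hx2 hxC⟩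
      obtain ⟨k, hk, hkgt⟩ := (hinf.mono hsub).exists_gt mm
      have hD : S3.Drel n k := hmm k ⟨hk.1, hkgt⟩
      have hχn : χ n = true := (hk.2 n le_rfl).mp hD
      simp [hχ, hn] at hχn
  refine hac C hCX A ⟨S3.decF, fun n => ?_⟩
  rw [S3.sat_decF, Function.update_self]
  conv_lhs => rw [hA']
  rfl
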